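/- Symmetry of the multi-sum expression in Theorem 2 for the case n = 2, m arbitrary, stated via the intermediate form (Theorem 2): for odd positive integers w₁, w₂, an integer x, and all m ≥ 0, ([w₁]_q^m/(1+q^{w₁}))·∑_{k=0}^{w₁-1} (-1)^k q^{w₂k} ℰ_{m,q^{w₁}}(w₂x + w₂k/w₁) = ([w₂]_q^m/(1+q^{w₂}))·∑_{k=0}^{w₂-1} (-1)^k q^{w₁k} ℰ_{m,q^{w₂}}(w₁x + w₁k/w₂), where ℰ_{m,q}(t) for rational t is defined by ℰ_{m,q}(t) = ∑_{l=0}^{m} C(m,l) q^{lt} ℰ_{l,q} [t]_q^{m-l} interpreted in a field containing ℚ(q^{1/(w₁w₂)}). -/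

import Mathlib

open Finset

/-- The Carlitz q-Euler recurrence with base `Q`. -/
def CarlitzRec (Q : RatFunc ℚ) (E : ℕ → RatFunc ℚ) : Prop :=
  ∀ n : ℕ,
    Q * (∑ l ∈ range (n + 1), (n.choose l : RatFunc ℚ) * Q ^ l * E l) + E n =
      if n = 0 then 1 + Q else 0

/-- The q-Euler polynomial `ℰ_{m,q'}(t)` at a rational argument `t`, where the
base is `q' = X^d` (`X` being the generator of the field `ℚ(Q)` of the context,
in which `q = X^{w₁w₂}`), and where `a = d·t ∈ ℤ`, so that `(q')^{lt} = X^{la}`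
and `[t]_{q'} = (1 - X^a)/(1 - X^d)`:
`ℰ_{m,q'}(t) = ∑_{l=0}^m C(m,l) (q')^{lt} ℰ_{l,q'} [t]_{q'}^{m-l}`. -/
noncomputable def qEulerPolyScaled (E : ℕ → RatFunc ℚ) (d : ℕ) (m : ℕ) (a : ℤ) :
    RatFunc ℚ :=
  ∑ l ∈ range (m + 1),
    (m.choose l : RatFunc ℚ) * RatFunc.X ^ ((l : ℤ) * a) * E l *
      ((1 - RatFunc.X ^ a) / (1 - RatFunc.X ^ (d : ℤ))) ^ (m - l)

/-! ### Auxiliary material -/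

lemma poly_one_add_X_pow_ne (n : ℕ) (hn : 0 < n) (c : ℚ) :
    (Polynomial.C c + Polynomial.X ^ n : Polynomial ℚ) ≠ 0 := by
  intro h
  have h2 := congrArg (fun p : Polynomial ℚ => p.coeff n) h
  simp [Polynomial.coeff_X_pow, Polynomial.coeff_C, hn.ne'] at h2

lemma one_add_c_X_pow_ne (n : ℕ) (hn : 0 < n) (c : ℚ) :
    (algebraMap ℚ (RatFunc ℚ) c + RatFunc.X ^ n : RatFunc ℚ) ≠ 0 := by
  have h3 : (algebraMap ℚ (RatFunc ℚ) c + RatFunc.X ^ n : RatFunc ℚ)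
      = algebraMap (Polynomial ℚ) (RatFunc ℚ) (Polynomial.C c + Polynomial.X ^ n) := by
    rw [map_add, map_pow, RatFunc.algebraMap_X, RatFunc.algebraMap_C]
    rw [← RatFunc.algebraMap_eq_C]
    congr 2
    exact Subsingleton.elim _ _
  rw [h3]
  exact RatFunc.algebraMap_ne_zero (poly_one_add_X_pow_ne n hn c)

lemma one_add_X_pow_ne (n : ℕ) (hn : 0 < n) :
    (1 + RatFunc.X ^ n : RatFunc ℚ) ≠ 0 := by
  have := one_add_c_X_pow_ne n hn 1
  simpa using this

lemma one_sub_X_pow_ne (n : ℕ) (hn : 0 < n) :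
    (1 - RatFunc.X ^ n : RatFunc ℚ) ≠ 0 := by
  have h1 := one_add_c_X_pow_ne n hn (-1)
  intro h
  apply h1
  rw [sub_eq_zero] at h
  rw [map_neg, map_one, ← h]
  ring

lemma choose_sq_sum {R : Type*} [CommRing R] (n j : ℕ) (hj : j ≤ n) (u v : R) :
    ∑ l ∈ range (n + 1), (n.choose l : R) * (l.choose j : R) * (u ^ l * v ^ (n - l)) =
      (n.choose j : R) * (u ^ j * (u + v) ^ (n - j)) := by
  rw [← Finset.sum_subset (show Ico j (n+1) ⊆ range (n+1) from fun x hx => by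
        simp only [mem_Ico, mem_range] at hx ⊢; omega)
      (fun x hx hnx => by
        simp only [mem_Ico, mem_range] at hx hnx
        have hxj : x < j := by omega
        rw [Nat.choose_eq_zero_of_lt hxj]
        push_cast; ring)]
  rw [Finset.sum_Ico_eq_sum_range]
  have hrange : n + 1 - j = (n - j) + 1 := by omega
  rw [hrange, add_pow]
  rw [Finset.mul_sum, Finset.mul_sum]
  apply Finset.sum_congr rfl
  intro i hi
  have hi' : i ≤ n - j := by simpa [Nat.lt_succ_iff] using hi
  have hc : n.choose (j + i) * (j + i).choose j = n.choose j * (n - j).choose i := by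
    rw [Nat.choose_mul (by omega), Nat.add_sub_cancel_left]
  have hcc : ((n.choose (j+i) : R) * ((j+i).choose j : R)) = (n.choose j : R) * ((n-j).choose i : R) := by
    exact_mod_cast congrArg (fun t : ℕ => (t : R)) hc
  have hu : u ^ (j + i) = u ^ j * u ^ i := pow_add u j i
  have hv : n - (j + i) = n - j - i := by omega
  rw [hu, hv, hcc]
  ring

lemma sum_swap_G {R : Type*} [CommRing R] (F : ℕ → R) (n : ℕ) (u v : R) :
    ∑ l ∈ range (n + 1), (n.choose l : R) * u ^ l * v ^ (n - l) *
        (∑ j ∈ range (l + 1), (l.choose j : R) * (-1) ^ j * F j)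
      = ∑ j ∈ range (n + 1), (n.choose j : R) * (-1) ^ j * F j * u ^ j * (u + v) ^ (n - j) := by
  have step1 : ∀ l ∈ range (n+1),
      (n.choose l : R) * u ^ l * v ^ (n - l) *
          (∑ j ∈ range (l + 1), (l.choose j : R) * (-1) ^ j * F j)
        = ∑ j ∈ range (n+1),
            (n.choose l : R) * (l.choose j : R) * (u ^ l * v ^ (n - l)) * ((-1) ^ j * F j) := by
    intro l hl
    simp only [mem_range] at hl
    rw [Finset.mul_sum, ← Finset.sum_subset (show range (l+1) ⊆ range (n+1) from fun x hx => by
          simp only [mem_range] at hx ⊢; omega)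
        (fun x hx hnx => by
          simp only [mem_range] at hx hnx
          have hlx : l < x := by omega
          rw [Nat.choose_eq_zero_of_lt hlx]
          push_cast; ring)]
    apply Finset.sum_congr rfl
    intro j _
    ring
  rw [Finset.sum_congr rfl step1, Finset.sum_comm]
  apply Finset.sum_congr rfl
  intro j hj
  have hj' : j ≤ n := by simpa [Nat.lt_succ_iff] using hj
  rw [← Finset.sum_mul, choose_sq_sum n j hj' u v]
  ring

/-- The closed form of the Carlitz q-Euler numbers. -/
noncomputable def cE (P : RatFunc ℚ) (n : ℕ) : RatFunc ℚ :=
  (1 + P) * (1 - P)⁻¹ ^ n *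
    ∑ j ∈ range (n + 1), (n.choose j : RatFunc ℚ) * (-1) ^ j * (1 + P ^ (j + 1))⁻¹

lemma alt_choose_sum (n : ℕ) :
    ∑ j ∈ range (n + 1), (n.choose j : RatFunc ℚ) * (-1) ^ j
      = if n = 0 then 1 else 0 := by
  have h := Int.alternating_sum_range_choose (n := n)
  have h2 := congrArg (fun z : ℤ => (z : RatFunc ℚ)) h
  push_cast at h2
  rw [← h2]
  apply Finset.sum_congr rfl
  intro j _
  ring

lemma cE_rec (P : RatFunc ℚ) (h1 : (1 : RatFunc ℚ) - P ≠ 0)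
    (h2 : ∀ j : ℕ, (1 : RatFunc ℚ) + P ^ (j + 1) ≠ 0) : CarlitzRec P (cE P) := by
  intro n
  have hr : P * (1 - P)⁻¹ + 1 = (1 - P)⁻¹ := by
    have h := inv_mul_cancel₀ h1
    linear_combination -h
  have hstep : ∑ l ∈ range (n + 1), (n.choose l : RatFunc ℚ) * P ^ l * cE P l
      = (1 + P) * ∑ j ∈ range (n + 1),
          (n.choose j : RatFunc ℚ) * (-1) ^ j * (1 + P ^ (j + 1))⁻¹ *
            (P * (1 - P)⁻¹) ^ j * (P * (1 - P)⁻¹ + 1) ^ (n - j) := by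
    rw [← sum_swap_G (fun j => (1 + P ^ (j + 1))⁻¹) n (P * (1 - P)⁻¹) 1, Finset.mul_sum]
    apply Finset.sum_congr rfl
    intro l _
    simp only [cE]
    ring
  rw [hstep, hr]
  simp only [cE]
  have hcollect :
      P * ((1 + P) * ∑ j ∈ range (n + 1),
            (n.choose j : RatFunc ℚ) * (-1) ^ j * (1 + P ^ (j + 1))⁻¹ *
              (P * (1 - P)⁻¹) ^ j * ((1 - P)⁻¹) ^ (n - j))
        + (1 + P) * (1 - P)⁻¹ ^ n *
            ∑ j ∈ range (n + 1), (n.choose j : RatFunc ℚ) * (-1) ^ j * (1 + P ^ (j + 1))⁻¹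
      = ∑ j ∈ range (n + 1),
          (P * ((1 + P) * ((n.choose j : RatFunc ℚ) * (-1) ^ j * (1 + P ^ (j + 1))⁻¹ *
              (P * (1 - P)⁻¹) ^ j * ((1 - P)⁻¹) ^ (n - j)))
            + (1 + P) * (1 - P)⁻¹ ^ n *
                ((n.choose j : RatFunc ℚ) * (-1) ^ j * (1 + P ^ (j + 1))⁻¹)) := by
    rw [Finset.mul_sum, Finset.mul_sum, Finset.mul_sum, ← Finset.sum_add_distrib]
  rw [hcollect]
  have key : ∀ j ∈ range (n + 1),
      P * ((1 + P) * ((n.choose j : RatFunc ℚ) * (-1) ^ j * (1 + P ^ (j + 1))⁻¹ *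
          (P * (1 - P)⁻¹) ^ j * ((1 - P)⁻¹) ^ (n - j)))
        + (1 + P) * (1 - P)⁻¹ ^ n *
            ((n.choose j : RatFunc ℚ) * (-1) ^ j * (1 + P ^ (j + 1))⁻¹)
      = (1 + P) * (1 - P)⁻¹ ^ n * ((n.choose j : RatFunc ℚ) * (-1) ^ j) := by
    intro j hj
    have hj' : j ≤ n := by simpa [Nat.lt_succ_iff] using hj
    have hpow : (P * (1 - P)⁻¹) ^ j * ((1 - P)⁻¹) ^ (n - j) = P ^ j * ((1 - P)⁻¹) ^ n := by
      rw [mul_pow, mul_assoc, ← pow_add]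
      congr 2
      omega
    have hF := inv_mul_cancel₀ (h2 j)
    linear_combination (P * (1 + P) * ((n.choose j : RatFunc ℚ) * (-1) ^ j) *
        (1 + P ^ (j + 1))⁻¹) * hpow +
      ((1 + P) * ((n.choose j : RatFunc ℚ) * (-1) ^ j) * ((1 - P)⁻¹) ^ n) * hF
  rw [Finset.sum_congr rfl key, ← Finset.mul_sum, alt_choose_sum]
  split_ifs with h
  · subst h
    simp
  · simp

lemma carlitz_unique (P : RatFunc ℚ) (h2 : ∀ j : ℕ, (1 : RatFunc ℚ) + P ^ (j + 1) ≠ 0)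
    (E E' : ℕ → RatFunc ℚ) (hE : CarlitzRec P E) (hE' : CarlitzRec P E') :
    ∀ n, E n = E' n := by
  intro n
  induction n using Nat.strong_induction_on with
  | _ n ih =>
    have h := hE n
    have h' := hE' n
    rw [Finset.sum_range_succ] at h h'
    have hs : ∑ l ∈ range n, (n.choose l : RatFunc ℚ) * P ^ l * E l
        = ∑ l ∈ range n, (n.choose l : RatFunc ℚ) * P ^ l * E' l :=
      Finset.sum_congr rfl fun l hl => by rw [ih l (mem_range.mp hl)]
    rw [hs] at h
    have heq := h.trans h'.symm
    have hcan : (1 + P ^ (n + 1)) * E n = (1 + P ^ (n + 1)) * E' n := by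
      simp only [Nat.choose_self, Nat.cast_one, one_mul] at heq
      linear_combination heq
    exact mul_left_cancel₀ (h2 n) hcan

lemma X_pow_succ_ne (d j : ℕ) (hd : 0 < d) :
    (1 : RatFunc ℚ) + (RatFunc.X ^ d) ^ (j + 1) ≠ 0 := by
  rw [← pow_mul]
  exact one_add_X_pow_ne (d * (j + 1)) (by positivity)

lemma qEP_closed (d : ℕ) (hd : 0 < d) (E : ℕ → RatFunc ℚ)
    (hE : CarlitzRec (RatFunc.X ^ d) E) (m : ℕ) (a : ℤ) :
    qEulerPolyScaled E d m a
      = (1 + RatFunc.X ^ d) * ((1 - RatFunc.X ^ d)⁻¹) ^ m *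
          ∑ j ∈ range (m + 1),
            (m.choose j : RatFunc ℚ) * (-1) ^ j * (1 + (RatFunc.X ^ d) ^ (j + 1))⁻¹ *
              (RatFunc.X ^ a) ^ j := by
  have h1 : (1 : RatFunc ℚ) - RatFunc.X ^ d ≠ 0 := one_sub_X_pow_ne d hd
  have h2 : ∀ j : ℕ, (1 : RatFunc ℚ) + (RatFunc.X ^ d) ^ (j + 1) ≠ 0 :=
    fun j => X_pow_succ_ne d j hd
  have hEeq : ∀ l, E l = cE (RatFunc.X ^ d) l :=
    carlitz_unique _ h2 E _ hE (cE_rec _ h1 h2)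
  have hzpow : ∀ l : ℕ, (RatFunc.X : RatFunc ℚ) ^ ((l : ℤ) * a) = (RatFunc.X ^ a) ^ l := by
    intro l
    rw [mul_comm, zpow_mul, zpow_natCast]
  set P : RatFunc ℚ := RatFunc.X ^ d with hP
  set u : RatFunc ℚ := RatFunc.X ^ a * (1 - P)⁻¹ with hu
  set v : RatFunc ℚ := (1 - RatFunc.X ^ a) * (1 - P)⁻¹ with hv
  have huv : u + v = (1 - P)⁻¹ := by rw [hu, hv]; ring
  calc qEulerPolyScaled E d m a
      = (1 + P) * ∑ l ∈ range (m + 1),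
          (m.choose l : RatFunc ℚ) * u ^ l * v ^ (m - l) *
            (∑ j ∈ range (l + 1), (l.choose j : RatFunc ℚ) * (-1) ^ j * (1 + P ^ (j + 1))⁻¹) := by
        unfold qEulerPolyScaled
        rw [Finset.mul_sum]
        apply Finset.sum_congr rfl
        intro l _
        rw [hEeq l]
        simp only [cE]
        rw [div_eq_mul_inv, zpow_natCast, hzpow l, hu, hv, ← hP]
        ring
    _ = (1 + P) * ∑ j ∈ range (m + 1),
          (m.choose j : RatFunc ℚ) * (-1) ^ j * (1 + P ^ (j + 1))⁻¹ * u ^ j *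
            (u + v) ^ (m - j) := by
        rw [sum_swap_G]
    _ = (1 + P) * ((1 - P)⁻¹) ^ m *
          ∑ j ∈ range (m + 1),
            (m.choose j : RatFunc ℚ) * (-1) ^ j * (1 + P ^ (j + 1))⁻¹ *
              (RatFunc.X ^ a) ^ j := by
        rw [huv, Finset.mul_sum, mul_assoc, Finset.mul_sum, Finset.mul_sum]
        apply Finset.sum_congr rfl
        intro j hj
        have hj' : j ≤ m := by simpa [Nat.lt_succ_iff] using hj
        have hq : ((1 - P)⁻¹) ^ j * ((1 - P)⁻¹) ^ (m - j) = ((1 - P)⁻¹) ^ m := by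
          rw [← pow_add]; congr 1; omega
        rw [hu]
        calc (1 + P) * ((m.choose j : RatFunc ℚ) * (-1) ^ j * (1 + P ^ (j + 1))⁻¹ *
              (RatFunc.X ^ a * (1 - P)⁻¹) ^ j * (1 - P)⁻¹ ^ (m - j))
            = (1 + P) * ((m.choose j : RatFunc ℚ) * (-1) ^ j * (1 + P ^ (j + 1))⁻¹ *
                (RatFunc.X ^ a) ^ j * (((1 - P)⁻¹) ^ j * ((1 - P)⁻¹) ^ (m - j))) := by
              rw [mul_pow]; ring
          _ = (1 + P) * ((1 - P)⁻¹ ^ m *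
                ((m.choose j : RatFunc ℚ) * (-1) ^ j * (1 + P ^ (j + 1))⁻¹ *
                  (RatFunc.X ^ a) ^ j)) := by rw [hq]; ring

lemma alt_geom_sum (w : ℕ) (hw : Odd w) (y : RatFunc ℚ) (hy : (1 : RatFunc ℚ) + y ≠ 0) :
    ∑ k ∈ range w, (-y) ^ k = (1 + y ^ w) * (1 + y)⁻¹ := by
  have h := geom_sum_mul (-y) w
  rw [Odd.neg_pow hw] at h
  rw [eq_mul_inv_iff_mul_eq₀ hy]
  linear_combination -h

/-- The manifestly symmetric canonical form of either side. -/
noncomputable def canon (w v : ℕ) (x : ℤ) (m : ℕ) : RatFunc ℚ :=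
  ((1 - RatFunc.X ^ (w * v))⁻¹) ^ m *
    ∑ j ∈ range (m + 1),
      (m.choose j : RatFunc ℚ) * (-1) ^ j *
        RatFunc.X ^ ((j : ℤ) * ((w : ℤ) ^ 2 * (v : ℤ) ^ 2 * x)) *
        ((1 + RatFunc.X ^ (w ^ 2 * v ^ 2 * (j + 1))) *
          ((1 + RatFunc.X ^ (w ^ 2 * v * (j + 1)))⁻¹ *
            (1 + RatFunc.X ^ (w * v ^ 2 * (j + 1)))⁻¹))

lemma side (w v : ℕ) (hw : Odd w) (hw0 : 0 < w) (hv0 : 0 < v) (x : ℤ) (m : ℕ)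
    (E : ℕ → RatFunc ℚ) (hE : CarlitzRec (RatFunc.X ^ (w ^ 2 * v)) E) :
    ((1 - RatFunc.X ^ (w ^ 2 * v)) / (1 - RatFunc.X ^ (w * v))) ^ m /
          (1 + RatFunc.X ^ (w ^ 2 * v)) *
        ∑ k ∈ range w,
          (-1 : RatFunc ℚ) ^ k * RatFunc.X ^ (w * v ^ 2 * k) *
            qEulerPolyScaled E (w ^ 2 * v) m
              ((w : ℤ) ^ 2 * (v : ℤ) ^ 2 * x + (w : ℤ) * (v : ℤ) ^ 2 * (k : ℤ))
      = canon w v x m := by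
  have hd : 0 < w ^ 2 * v := by positivity
  set A : ℤ := (w : ℤ) ^ 2 * (v : ℤ) ^ 2 * x with hA
  set B : ℤ := (w : ℤ) * (v : ℤ) ^ 2 with hB
  set P : RatFunc ℚ := RatFunc.X ^ (w ^ 2 * v) with hP
  have hP1 : (1 : RatFunc ℚ) + P ≠ 0 := one_add_X_pow_ne _ hd
  have hPm1 : (1 : RatFunc ℚ) - P ≠ 0 := one_sub_X_pow_ne _ hd
  have key : ∀ k j : ℕ,
      (-1 : RatFunc ℚ) ^ k * RatFunc.X ^ (w * v ^ 2 * k) *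
          (RatFunc.X ^ (A + B * (k : ℤ))) ^ j
        = RatFunc.X ^ ((j : ℤ) * A) * (-(RatFunc.X ^ (w * v ^ 2 * (j + 1)))) ^ k := by
    intro k j
    have e1 : ((RatFunc.X : RatFunc ℚ) ^ (A + B * (k : ℤ))) ^ j
        = RatFunc.X ^ ((A + B * (k : ℤ)) * (j : ℤ)) := by
      rw [zpow_mul, zpow_natCast]
    have e2 : (RatFunc.X : RatFunc ℚ) ^ (w * v ^ 2 * k) = RatFunc.X ^ (B * (k : ℤ)) := by
      rw [← zpow_natCast RatFunc.X (w * v ^ 2 * k)]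
      congr 1
    have e3 : (RatFunc.X : RatFunc ℚ) ^ (B * ((j : ℤ) + 1) * (k : ℤ))
        = (RatFunc.X ^ (w * v ^ 2 * (j + 1))) ^ k := by
      rw [← zpow_natCast (RatFunc.X ^ (w * v ^ 2 * (j + 1))) k,
        ← zpow_natCast RatFunc.X (w * v ^ 2 * (j + 1)), ← zpow_mul]
      congr 1
    calc (-1 : RatFunc ℚ) ^ k * RatFunc.X ^ (w * v ^ 2 * k) *
          (RatFunc.X ^ (A + B * (k : ℤ))) ^ j
        = (-1 : RatFunc ℚ) ^ k *
            (RatFunc.X ^ (B * (k : ℤ)) * RatFunc.X ^ ((A + B * (k : ℤ)) * (j : ℤ))) := by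
          rw [e2, e1]; ring
      _ = (-1 : RatFunc ℚ) ^ k * RatFunc.X ^ (B * (k : ℤ) + (A + B * (k : ℤ)) * (j : ℤ)) := by
          rw [zpow_add₀ RatFunc.X_ne_zero]
      _ = (-1 : RatFunc ℚ) ^ k * RatFunc.X ^ ((j : ℤ) * A + B * ((j : ℤ) + 1) * (k : ℤ)) := by
          rw [show B * (k : ℤ) + (A + B * (k : ℤ)) * (j : ℤ)
              = (j : ℤ) * A + B * ((j : ℤ) + 1) * (k : ℤ) from by ring]
      _ = RatFunc.X ^ ((j : ℤ) * A) *
            ((-1 : RatFunc ℚ) ^ k * RatFunc.X ^ (B * ((j : ℤ) + 1) * (k : ℤ))) := by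
          rw [zpow_add₀ RatFunc.X_ne_zero]; ring
      _ = RatFunc.X ^ ((j : ℤ) * A) * (-(RatFunc.X ^ (w * v ^ 2 * (j + 1)))) ^ k := by
          rw [e3, ← neg_pow]
  have hsum1 : ∀ k ∈ range w,
      (-1 : RatFunc ℚ) ^ k * RatFunc.X ^ (w * v ^ 2 * k) *
          qEulerPolyScaled E (w ^ 2 * v) m (A + B * (k : ℤ))
        = (1 + P) * ((1 - P)⁻¹) ^ m *
            ∑ j ∈ range (m + 1),
              (m.choose j : RatFunc ℚ) * (-1) ^ j * (1 + P ^ (j + 1))⁻¹ *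
                RatFunc.X ^ ((j : ℤ) * A) * (-(RatFunc.X ^ (w * v ^ 2 * (j + 1)))) ^ k := by
    intro k _
    rw [qEP_closed _ hd E hE m _]
    rw [Finset.mul_sum, Finset.mul_sum, Finset.mul_sum]
    apply Finset.sum_congr rfl
    intro j _
    have hk := key k j
    linear_combination ((1 + P) * ((1 - P)⁻¹) ^ m *
      ((m.choose j : RatFunc ℚ) * (-1) ^ j * (1 + P ^ (j + 1))⁻¹)) * hk
  rw [Finset.sum_congr rfl hsum1, ← Finset.mul_sum]
  have hcancel : ∀ Z : RatFunc ℚ,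
      ((1 - P) / (1 - RatFunc.X ^ (w * v))) ^ m / (1 + P) *
          ((1 + P) * ((1 - P)⁻¹) ^ m * Z)
        = ((1 - RatFunc.X ^ (w * v))⁻¹) ^ m * Z := by
    intro Z
    have c1 : (1 - P) ^ m * ((1 - P)⁻¹) ^ m = 1 := by
      rw [← mul_pow, mul_inv_cancel₀ hPm1, one_pow]
    have c2 : (1 + P)⁻¹ * (1 + P) = 1 := inv_mul_cancel₀ hP1
    rw [div_eq_mul_inv, div_eq_mul_inv, mul_pow]
    linear_combination (((1 - RatFunc.X ^ (w * v))⁻¹) ^ m * Z * ((1 + P)⁻¹ * (1 + P))) * c1 +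
      (((1 - RatFunc.X ^ (w * v))⁻¹) ^ m * Z) * c2
  rw [hcancel]
  unfold canon
  congr 1
  rw [Finset.sum_comm]
  apply Finset.sum_congr rfl
  intro j _
  have hy : (1 : RatFunc ℚ) + RatFunc.X ^ (w * v ^ 2 * (j + 1)) ≠ 0 :=
    one_add_X_pow_ne _ (by positivity)
  have hgeo : ∑ k ∈ range w, (-(RatFunc.X ^ (w * v ^ 2 * (j + 1)) : RatFunc ℚ)) ^ k
      = (1 + RatFunc.X ^ (w ^ 2 * v ^ 2 * (j + 1))) *
          (1 + RatFunc.X ^ (w * v ^ 2 * (j + 1)))⁻¹ := by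
    rw [alt_geom_sum w hw _ hy, ← pow_mul,
      show w * v ^ 2 * (j + 1) * w = w ^ 2 * v ^ 2 * (j + 1) from by ring]
  have hPj : P ^ (j + 1) = RatFunc.X ^ (w ^ 2 * v * (j + 1)) := by
    rw [hP, ← pow_mul]
  calc ∑ k ∈ range w,
        (m.choose j : RatFunc ℚ) * (-1) ^ j * (1 + P ^ (j + 1))⁻¹ *
          RatFunc.X ^ ((j : ℤ) * A) * (-(RatFunc.X ^ (w * v ^ 2 * (j + 1)))) ^ k
      = (m.choose j : RatFunc ℚ) * (-1) ^ j * (1 + P ^ (j + 1))⁻¹ *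
          RatFunc.X ^ ((j : ℤ) * A) *
          ∑ k ∈ range w, (-(RatFunc.X ^ (w * v ^ 2 * (j + 1)))) ^ k := by
        rw [Finset.mul_sum]
    _ = (m.choose j : RatFunc ℚ) * (-1) ^ j *
          RatFunc.X ^ ((j : ℤ) * A) *
          ((1 + RatFunc.X ^ (w ^ 2 * v ^ 2 * (j + 1))) *
            ((1 + RatFunc.X ^ (w ^ 2 * v * (j + 1)))⁻¹ *
              (1 + RatFunc.X ^ (w * v ^ 2 * (j + 1)))⁻¹)) := by
        rw [hgeo, hPj]; ring

lemma canon_symm (w v : ℕ) (x : ℤ) (m : ℕ) : canon w v x m = canon v w x m := by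
  unfold canon
  rw [mul_comm w v]
  congr 1
  apply Finset.sum_congr rfl
  intro j _
  rw [show w ^ 2 * v ^ 2 * (j + 1) = v ^ 2 * w ^ 2 * (j + 1) from by ring,
    show (w : ℤ) ^ 2 * (v : ℤ) ^ 2 * x = (v : ℤ) ^ 2 * (w : ℤ) ^ 2 * x from by ring,
    show w ^ 2 * v * (j + 1) = v * w ^ 2 * (j + 1) from by ring,
    show w * v ^ 2 * (j + 1) = v ^ 2 * w * (j + 1) from by ring]
  ring

theorem symmetry_thm2_n2 (w₁ w₂ : ℕ) (hw₁ : Odd w₁) (hw₁0 : 0 < w₁)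
    (hw₂ : Odd w₂) (hw₂0 : 0 < w₂) (x : ℤ) (m : ℕ)
    (E₁ E₂ : ℕ → RatFunc ℚ)
    (hE₁ : CarlitzRec (RatFunc.X ^ (w₁ ^ 2 * w₂)) E₁)
    (hE₂ : CarlitzRec (RatFunc.X ^ (w₁ * w₂ ^ 2)) E₂) :
    ((1 - RatFunc.X ^ (w₁ ^ 2 * w₂)) / (1 - RatFunc.X ^ (w₁ * w₂))) ^ m /
          (1 + RatFunc.X ^ (w₁ ^ 2 * w₂)) *
        ∑ k ∈ range w₁,
          (-1 : RatFunc ℚ) ^ k * RatFunc.X ^ (w₁ * w₂ ^ 2 * k) *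
            qEulerPolyScaled E₁ (w₁ ^ 2 * w₂) m
              ((w₁ : ℤ) ^ 2 * (w₂ : ℤ) ^ 2 * x + (w₁ : ℤ) * (w₂ : ℤ) ^ 2 * (k : ℤ)) =
      ((1 - RatFunc.X ^ (w₁ * w₂ ^ 2)) / (1 - RatFunc.X ^ (w₁ * w₂))) ^ m /
          (1 + RatFunc.X ^ (w₁ * w₂ ^ 2)) *
        ∑ k ∈ range w₂,
          (-1 : RatFunc ℚ) ^ k * RatFunc.X ^ (w₁ ^ 2 * w₂ * k) *
            qEulerPolyScaled E₂ (w₁ * w₂ ^ 2) m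
              ((w₁ : ℤ) ^ 2 * (w₂ : ℤ) ^ 2 * x + (w₁ : ℤ) ^ 2 * (w₂ : ℤ) * (k : ℤ)) := by
  rw [side w₁ w₂ hw₁ hw₁0 hw₂0 x m E₁ hE₁]
  have h1 : w₁ * w₂ ^ 2 = w₂ ^ 2 * w₁ := by ring
  have h2 : ∀ k : ℕ, w₁ ^ 2 * w₂ * k = w₂ * w₁ ^ 2 * k := fun k => by ring
  have h3 : ∀ k : ℕ, (w₁ : ℤ) ^ 2 * (w₂ : ℤ) ^ 2 * x + (w₁ : ℤ) ^ 2 * (w₂ : ℤ) * (k : ℤ)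
      = (w₂ : ℤ) ^ 2 * (w₁ : ℤ) ^ 2 * x + (w₂ : ℤ) * (w₁ : ℤ) ^ 2 * (k : ℤ) := fun k => by
    ring
  have h4 : w₁ * w₂ = w₂ * w₁ := by ring
  rw [h1] at hE₂
  simp only [h1, h2, h3, h4]
  rw [side w₂ w₁ hw₂ hw₂0 hw₁0 x m E₂ hE₂]
  exact canon_symm w₁ w₂ x m
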